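/- Let K/k be a finite extension of fields and L a simple Lie algebra over K of dimension n ≥ 1. Then the Weil restriction R_{K/k}(L), i.e., L viewed as a Lie algebra over k by restriction of scalars, is a simple Lie algebra over k of dimension [K:k]·n. -/

import Mathlib

/-- If `K/k` is a finite field extension and `L` a simple Lie algebra
over `K` (of dimension `n ≥ 1`, automatic from simplicity), then the Weil restriction
`R_{K/k}(L)` — the same Lie ring viewed as a Lie algebra over `k` — is simple over `k`
and has `k`-dimension `[K:k] · dim_K L`. -/
theorem weil_restriction_simple {k K L : Type*} [Field k] [Field K] [Algebra k K]
    [FiniteDimensional k K]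
    [LieRing L] [LieAlgebra K L] [FiniteDimensional K L]
    [Module k L] [IsScalarTower k K L] [LieAlgebra k L]
    [LieAlgebra.IsSimple K L] :
    LieAlgebra.IsSimple k L ∧
      Module.finrank k L = Module.finrank k K * Module.finrank K L := by
  refine ⟨⟨fun I => ?_, LieAlgebra.IsSimple.non_abelian K⟩,
    (Module.finrank_mul_finrank k K L).symm⟩
  by_cases h : ∃ x : L, ∃ y ∈ I, ⁅x, y⁆ ≠ 0
  · right
    obtain ⟨x, y, hyI, hxy⟩ := h
    -- the K-core of I is a K-Lie ideal
    set J : LieIdeal K L :=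
      { carrier := {z : L | ∀ c : K, c • z ∈ I}
        add_mem' := fun {a b} ha hb c => by
          rw [smul_add]; exact add_mem (ha c) (hb c)
        zero_mem' := fun c => by rw [smul_zero]; exact zero_mem I
        smul_mem' := fun c' z hz c => by
          rw [smul_smul]; exact hz (c * c')
        lie_mem := fun {m z} hz c => by
          rw [← lie_smul]; exact lie_mem_right k L I _ _ (hz c) } with hJ
    have hJtop : J = ⊤ := by
      rcases LieAlgebra.IsSimple.eq_bot_or_eq_top J with hbot | htop
      · exfalso
        have hmem : ⁅x, y⁆ ∈ J := fun c => by
          rw [← smul_lie]; exact lie_mem_right k L I _ _ hyI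
        rw [hbot, LieSubmodule.mem_bot] at hmem
        exact hxy hmem
      · exact htop
    rw [eq_top_iff]
    intro z _
    have hz : z ∈ J := by rw [hJtop]; exact LieSubmodule.mem_top z
    simpa using hz 1
  · left
    push_neg at h
    rw [eq_bot_iff]
    intro m hm
    have : m ∈ LieAlgebra.center K L := by
      rw [LieModule.mem_maxTrivSubmodule]
      intro x; exact h x m hm
    rwa [LieAlgebra.center_eq_bot, LieSubmodule.mem_bot] at this
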